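/- Fix a real number p with 0 < p ≤ r, where r is the root in (0,1/2) of p³ − 6p² + 5p − 1 = 0 (≈ 0.308). Let (φ, p) be a potential for the immediate-release game with ĝ = p, set λ = (1−p)²/(1−2p), μ = p²/(1−2p), c = p·(1−p)/(1−2p), and define σ : ℕ×ℕ → ℝ by σ(a,b) = φ(a,b) if a ≤ b, and σ(a,b) = a·λ − b·μ − c if a ≥ b+1 (the two formulas agree when a = b+1, since φ(b+1,b) = b+1−p = (b+1)λ − bμ − c). Then σ satisfies the strategic-release Bellman recurrence with gain p: for all (a,b) ∈ ℕ×ℕ, σ(a,b) = max( max_{0 ≤ s < b} σ(0,s), p·σ(a+1,b) + (1−p)·σ(a,b+1) − p(1−p), [σ(a−b−1, 0) + b + 1 − p if a ≥ b+1] ), where the maximum over s is omitted when b = 0 and the last option is omitted when a < b+1. -/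

import Mathlib

/-- A potential for the immediate-release bitcoin mining game, for a strategic
miner of relative computational power `p` playing against honest FRONTIER
miners of collective power `1 − p`.  It consists of a potential function
`φ a b` (the miner's advantage for being at the state where his branch has
length `a` and the honest branch has length `b`; meaningful for `a ≤ b + 1`)
and the optimal expected gain per level `gain`, satisfying: `φ 0 0 = 0`;
`φ ≥ 0` on states; `gain ≥ p`; the winning-state equation
`φ (b+1) b = φ 0 0 + (b+1) − gain`; the Bellman equation for `a ≤ b`,
`φ a b = max (max_{0 ≤ s < b} φ 0 s)
             (p·φ (a+1) b + (1−p)·φ a (b+1) − (1−p)·gain)`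
(where the maximum over `s` is omitted when `b = 0`); monotonicity of `φ a b`
in `a`; and the shift bound
`φ (a+c) (b+c) ≤ φ a b + c·(p/(1−p))^(1+b−a)`. -/
structure MiningPotential (p : ℝ) where
  φ : ℕ → ℕ → ℝ
  gain : ℝ
  zero : φ 0 0 = 0
  nonneg : ∀ a b : ℕ, a ≤ b + 1 → 0 ≤ φ a b
  gain_ge : p ≤ gain
  win : ∀ b : ℕ, φ (b + 1) b = φ 0 0 + (b + 1) - gain
  bellman : ∀ a b : ℕ, a ≤ b →
    φ a b = ((List.range b).map (fun s => φ 0 s)).foldr max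
      (p * φ (a + 1) b + (1 - p) * φ a (b + 1) - (1 - p) * gain)
  mono : ∀ a b : ℕ, a ≤ b → φ a b ≤ φ (a + 1) b
  shift : ∀ a b c : ℕ, a ≤ b + 1 →
    φ (a + c) (b + c) ≤ φ a b + (c : ℝ) * (p / (1 - p)) ^ (1 + b - a)

/-- A state `(a, b)` with `a ≤ b` is a mining state of the potential `P` if at
`(a, b)` the Bellman maximum is attained by continuing to mine. -/
def MiningPotential.IsMiningState {p : ℝ} (P : MiningPotential p) (a b : ℕ) : Prop :=
  a ≤ b ∧
    P.φ a b = p * P.φ (a + 1) b + (1 - p) * P.φ a (b + 1) - (1 - p) * P.gain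


private lemma foldr_max_eq' {l : List ℝ} {x : ℝ} (h : ∀ y ∈ l, y ≤ x) :
    l.foldr max x = x := by
  induction l with
  | nil => rfl
  | cons a l ih =>
    simp only [List.foldr_cons]
    rw [ih (fun y hy => h y (List.mem_cons_of_mem _ hy)),
      max_eq_right (h a List.mem_cons_self)]

set_option maxHeartbeats 1000000 in
theorem strategic_release_potential_solution (p r : ℝ)
    (hr0 : 0 < r) (hr2 : r < 1 / 2)
    (hroot : r ^ 3 - 6 * r ^ 2 + 5 * r - 1 = 0)
    (hp0 : 0 < p) (hpr : p ≤ r)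
    (P : MiningPotential p) (hgain : P.gain = p)
    (lam mu c : ℝ)
    (hlam : lam = (1 - p) ^ 2 / (1 - 2 * p))
    (hmu : mu = p ^ 2 / (1 - 2 * p))
    (hc : c = p * (1 - p) / (1 - 2 * p))
    (σ : ℕ → ℕ → ℝ)
    (hσlow : ∀ a b : ℕ, a ≤ b → σ a b = P.φ a b)
    (hσhigh : ∀ a b : ℕ, b + 1 ≤ a → σ a b = (a : ℝ) * lam - (b : ℝ) * mu - c) :
    ∀ a b : ℕ,
      σ a b = ((List.range b).map (fun s => σ 0 s)).foldr max
        (if b + 1 ≤ a then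
          max (p * σ (a + 1) b + (1 - p) * σ a (b + 1) - p * (1 - p))
            (σ (a - b - 1) 0 + (b + 1) - p)
        else p * σ (a + 1) b + (1 - p) * σ a (b + 1) - p * (1 - p)) := by
  have hp2 : p < 1/2 := lt_of_le_of_lt hpr hr2
  have h2p : (0:ℝ) < 1 - 2*p := by linarith
  have h2ne : (1:ℝ) - 2*p ≠ 0 := ne_of_gt h2p
  have hp1 : (0:ℝ) < 1 - p := by linarith
  have hp1ne : (1:ℝ) - p ≠ 0 := ne_of_gt hp1
  have key : p^3 - 6*p^2 + 5*p - 1 ≤ 0 := by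
    have hr4 : r ≤ 2/5 := by
      by_contra h
      push_neg at h
      nlinarith [mul_pos (sub_pos.2 h) (sub_pos.2 hr2), sq_nonneg (r - 2/5),
        sq_nonneg (r - 1/2), mul_pos (mul_pos (sub_pos.2 h) (sub_pos.2 hr2)) (sub_pos.2 h)]
    nlinarith [mul_nonneg (sub_nonneg.2 hpr)
      (show (0:ℝ) ≤ p^2 + p*r + r^2 - 6*p - 6*r + 5 by nlinarith), hroot]
  have id1 : ∀ x : ℝ, (x+1)*lam - x*mu - c = x + 1 - p := by
    intro x; rw [hlam, hmu, hc]; field_simp [show (1:ℝ) - p * 2 ≠ 0 by intro h; apply h2ne; linarith]; ring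
  have hlam0 : 0 ≤ lam := by
    rw [hlam]; exact div_nonneg (sq_nonneg _) h2p.le
  have hc0 : 0 ≤ c := by
    rw [hc]; exact div_nonneg (by nlinarith) h2p.le
  -- σ agrees with φ on all of a ≤ b + 1
  have hσφ : ∀ a b : ℕ, a ≤ b + 1 → σ a b = P.φ a b := by
    intro a b h
    rcases Nat.lt_or_ge a (b+1) with h' | h'
    · exact hσlow a b (Nat.lt_succ_iff.mp h')
    · have ha : a = b + 1 := le_antisymm h h'
      subst ha
      rw [hσhigh _ _ le_rfl, P.win b, P.zero, hgain]
      push_cast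
      linarith [id1 (b:ℝ)]
  -- bound on φ 0 s
  have phi_bound : ∀ s : ℕ, P.φ 0 s ≤ (s:ℝ) * (p/(1-p)) := by
    intro s
    have hmono : ∀ k : ℕ, k ≤ s → P.φ 0 s ≤ P.φ k s := by
      intro k
      induction k with
      | zero => intro _; exact le_refl _
      | succ n ih =>
        intro hk
        have h1 : n ≤ s := Nat.le_of_succ_le hk
        exact le_trans (ih h1) (P.mono n s h1)
    have hs := P.shift 0 0 s (by omega)
    simp only [Nat.zero_add, Nat.add_zero, Nat.sub_zero, pow_one, P.zero, zero_add] at hs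
    exact le_trans (hmono s le_rfl) hs
  have hdiv1 : p / (1-p) ≤ 1 := by
    rw [div_le_one hp1]; linarith
  intro a b
  by_cases hba : b + 1 ≤ a
  · -- high region
    rw [if_pos hba]
    have hABcast : (b:ℝ) + 1 ≤ (a:ℝ) := by exact_mod_cast hba
    have hσab : σ a b = (a:ℝ)*lam - (b:ℝ)*mu - c := hσhigh a b hba
    have hσa1b : σ (a+1) b = ((a:ℝ)+1)*lam - (b:ℝ)*mu - c := by
      rw [hσhigh (a+1) b (by omega)]; push_cast; ring
    -- σ a b ≥ b+1-p
    have hge : (b:ℝ) + 1 - p ≤ σ a b := by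
      rw [hσab]
      have := mul_nonneg (by linarith : (0:ℝ) ≤ (a:ℝ) - ((b:ℝ)+1)) hlam0
      nlinarith [id1 (b:ℝ)]
    -- elements of the list are ≤ σ a b
    have elem : ∀ y ∈ (List.range b).map (fun s => σ 0 s), y ≤ σ a b := by
      intro y hy
      rw [List.mem_map] at hy
      obtain ⟨s, hs, rfl⟩ := hy
      rw [List.mem_range] at hs
      rw [hσlow 0 s (Nat.zero_le _)]
      have h1 : P.φ 0 s ≤ (s:ℝ) * (p/(1-p)) := phi_bound s
      have h2 : (s:ℝ) * (p/(1-p)) ≤ (s:ℝ) :=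
        le_trans (mul_le_mul_of_nonneg_left hdiv1 (Nat.cast_nonneg s)) (by linarith)
      have h3 : (s:ℝ) ≤ (b:ℝ) - 1 := by
        have : (s:ℝ) + 1 ≤ (b:ℝ) := by exact_mod_cast hs
        linarith
      linarith
    -- the base of the fold equals σ a b
    have base_eq : max (p * σ (a + 1) b + (1 - p) * σ a (b + 1) - p * (1 - p))
        (σ (a - b - 1) 0 + (↑b + 1) - p) = σ a b := by
      rcases Nat.lt_or_ge a (b+2) with h2' | h2'
      · -- a = b + 1
        have ha : a = b + 1 := by omega
        subst ha
        have hrel0 : b + 1 - b - 1 = 0 := by omega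
        have hrel : σ (b + 1 - b - 1) 0 + ((b:ℝ) + 1) - p = (b:ℝ) + 1 - p := by
          rw [hrel0, hσlow 0 0 le_rfl, P.zero]; ring
        have hσval : σ (b+1) b = (b:ℝ) + 1 - p := by
          rw [hσab]; push_cast; linarith [id1 (b:ℝ)]
        have hσa_b1 : σ (b+1) (b+1) = P.φ (b+1) (b+1) := hσlow (b+1) (b+1) le_rfl
        -- bound the mining option
        have hφb : P.φ (b+1) (b+1) ≤ ((b:ℝ)+1) * (p/(1-p)) := by
          have hs := P.shift 0 0 (b+1) (by omega)
          simp only [Nat.zero_add, Nat.add_zero, Nat.sub_zero, pow_one, P.zero, zero_add] at hs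
          calc P.φ (b+1) (b+1) ≤ ((b+1 : ℕ):ℝ) * (p/(1-p)) := hs
            _ = ((b:ℝ)+1) * (p/(1-p)) := by push_cast; ring
        have hmul : (1-p) * (((b:ℝ)+1) * (p/(1-p))) = ((b:ℝ)+1) * p := by
          field_simp
        have expand : ((b:ℝ)+1) - p - (p*(((b:ℝ)+2)*lam - (b:ℝ)*mu - c) + ((b:ℝ)+1)*p - p*(1-p))
            = (((b:ℝ)+1)*(1-2*p)^2 - (p^3 - 2*p^2+p)) / (1-2*p) := by
          rw [hlam, hmu, hc]; field_simp [show (1:ℝ) - p * 2 ≠ 0 by intro h; apply h2ne; linarith]; ring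
        have num : (0:ℝ) ≤ ((b:ℝ)+1)*(1-2*p)^2 - (p^3 - 2*p^2+p) := by
          have hb0 : (0:ℝ) ≤ (b:ℝ) := Nat.cast_nonneg b
          nlinarith [mul_nonneg hb0 (sq_nonneg (1-2*p)), key]
        have hmine : p * σ (b+1+1) b + (1 - p) * σ (b+1) (b+1) - p * (1 - p) ≤ (b:ℝ) + 1 - p := by
          rw [hσa_b1]
          have e1 : σ (b+1+1) b = ((b:ℝ)+2)*lam - (b:ℝ)*mu - c := by
            rw [hσhigh (b+1+1) b (by omega)]; push_cast; ring
          rw [e1]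
          have h4 : (1-p) * P.φ (b+1) (b+1) ≤ ((b:ℝ)+1) * p := by
            calc (1-p) * P.φ (b+1) (b+1) ≤ (1-p) * (((b:ℝ)+1) * (p/(1-p))) :=
              mul_le_mul_of_nonneg_left hφb hp1.le
              _ = ((b:ℝ)+1) * p := hmul
          have h5 := div_nonneg num h2p.le
          linarith [expand]
        rw [hrel, hσval]
        exact max_eq_right hmine
      · -- a ≥ b + 2
        have hσab1 : σ a (b+1) = (a:ℝ)*lam - ((b:ℝ)+1)*mu - c := by
          rw [hσhigh a (b+1) h2']; push_cast; ring
        have miner_eq : p * σ (a + 1) b + (1 - p) * σ a (b + 1) - p * (1 - p) = σ a b := by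
          rw [hσa1b, hσab1, hσab, hlam, hmu, hc]; field_simp [show (1:ℝ) - p * 2 ≠ 0 by intro h; apply h2ne; linarith]; ring
        have hcast : ((a - b - 1 : ℕ):ℝ) = (a:ℝ) - (b:ℝ) - 1 := by
          have e : a - b - 1 = a - (b+1) := by omega
          rw [e, Nat.cast_sub hba]; push_cast; ring
        have hrel : σ (a - b - 1) 0 + ((b:ℝ) + 1) - p = σ a b - c := by
          rw [hσhigh (a - b - 1) 0 (by omega), hcast, hσab]
          push_cast
          nlinarith [id1 (b:ℝ)]
        rw [miner_eq, hrel]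
        exact max_eq_left (by linarith)
    rw [base_eq]
    exact (foldr_max_eq' elem).symm
  · -- low region: a ≤ b
    rw [if_neg hba]
    have hab : a ≤ b := by omega
    have e4 : (List.range b).map (fun s => σ 0 s) = (List.range b).map (fun s => P.φ 0 s) :=
      List.map_congr_left (fun s _ => hσlow 0 s (Nat.zero_le s))
    have ebase : p * σ (a + 1) b + (1 - p) * σ a (b + 1) - p * (1 - p)
        = p * P.φ (a + 1) b + (1 - p) * P.φ a (b + 1) - (1 - p) * P.gain := by
      rw [hσφ (a+1) b (by omega), hσlow a (b+1) (by omega), hgain]; ring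
    rw [hσlow a b hab, e4, ebase]
    exact P.bellman a b hab
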